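/- Let s ∈ W be an involution (s² = e) such that s(ϖ_i) ≠ ϖ_i for every i ∈ {1,…,l}. Then the function f(λ) := ‖λ − s(λ)‖² is a homogeneous quadratic polynomial in the coordinates λ₁,…,λ_l of λ = Σ_{i=1}^l λ_i ϖ_i: there exist real constants c_{ij} (1 ≤ i, j ≤ l) with c_{ii} > 0 for every i and c_{ij} ≥ 0 for every i ≠ j, such that ‖λ − s(λ)‖² = Σ_{i,j} c_{ij} λ_i λ_j for all λ ∈ V. -/

import Mathlib

open scoped RealInnerProductSpace

noncomputable section

/-- The pairing `⟨v, a∨⟩ = 2⟪v,a⟫/⟪a,a⟫` of `v` against the coroot of `a`. -/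
def copair {V : Type*} [NormedAddCommGroup V] [InnerProductSpace ℝ V] (v a : V) : ℝ :=
  2 * ⟪v, a⟫ / ⟪a, a⟫

/-- The orthogonal reflection `s_a` in the hyperplane orthogonal to `a`,
as a linear isometry of `V`. -/
def sRefl {V : Type*} [NormedAddCommGroup V] [InnerProductSpace ℝ V] [FiniteDimensional ℝ V]
    (a : V) : V ≃ₗᵢ[ℝ] V :=
  Submodule.reflection (ℝ ∙ a)ᗮ

/-- A finite crystallographic reduced root system `Φ` spanning a finite-dimensional real inner
product space `V`, together with a choice of positive roots `pos`, simple roots `sroot`,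
and fundamental weights `fw`. -/
structure RootSystemCtx (V : Type*) [NormedAddCommGroup V] [InnerProductSpace ℝ V]
    [FiniteDimensional ℝ V] where
  l : ℕ
  Φ : Finset V
  pos : Finset V
  sroot : Fin l → V
  fw : Fin l → V
  nonzero : ∀ a ∈ Φ, a ≠ (0 : V)
  span_top : Submodule.span ℝ (Φ : Set V) = ⊤
  reduced : ∀ a ∈ Φ, ∀ t : ℝ, t • a ∈ Φ → t = 1 ∨ t = -1
  refl_mem : ∀ a ∈ Φ, ∀ b ∈ Φ, sRefl a b ∈ Φ
  crystal : ∀ a ∈ Φ, ∀ b ∈ Φ, ∃ n : ℤ, copair b a = (n : ℝ)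
  pos_subset : pos ⊆ Φ
  mem_pos_or : ∀ a ∈ Φ, (a ∈ pos ∧ -a ∉ pos) ∨ (a ∉ pos ∧ -a ∈ pos)
  sroot_mem : ∀ i, sroot i ∈ pos
  sroot_indep : LinearIndependent ℝ sroot
  pos_nat_comb : ∀ a ∈ pos, ∃ c : Fin l → ℕ, a = ∑ i, (c i : ℝ) • sroot i
  fw_pairing : ∀ i j, copair (fw i) (sroot j) = if i = j then 1 else 0

namespace RootSystemCtx

variable {V : Type*} [NormedAddCommGroup V] [InnerProductSpace ℝ V] [FiniteDimensional ℝ V]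
variable (R : RootSystemCtx V)

/-- The half sum of the positive roots, `ρ = Σ_i ϖ_i`. -/
def rho : V := ∑ i, R.fw i

/-- The Weyl group `W`, the subgroup of the isometry group of `V` generated by the
reflections in the roots. -/
def weylGroup : Subgroup (V ≃ₗᵢ[ℝ] V) :=
  Subgroup.closure {g | ∃ a ∈ R.Φ, g = sRefl a}

/-- `γ` is an expression of `w` as a product of simple reflections. -/
def IsExpression (w : V ≃ₗᵢ[ℝ] V) (γ : List (Fin R.l)) : Prop :=
  w = (γ.map fun i => sRefl (R.sroot i)).prod

/-- `γ` is a reduced expression of `w`: an expression of minimal possible length. -/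
def IsReducedExpression (w : V ≃ₗᵢ[ℝ] V) (γ : List (Fin R.l)) : Prop :=
  R.IsExpression w γ ∧ ∀ γ' : List (Fin R.l), R.IsExpression w γ' → γ.length ≤ γ'.length

/-- A weight is dominant if it pairs nonnegatively with every simple coroot. -/
def IsDominant (v : V) : Prop := ∀ i, 0 ≤ copair v (R.sroot i)

/-- `d` is the dominant representative `{v}` of the Weyl group orbit of `v`. -/
def IsDomRep (v d : V) : Prop := R.IsDominant d ∧ ∃ w ∈ R.weylGroup, w v = d

end RootSystemCtx


section Helpers

variable {V : Type*} [NormedAddCommGroup V] [InnerProductSpace ℝ V] [FiniteDimensional ℝ V]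

lemma sRefl_apply' (a v : V) : sRefl a v = v - copair v a • a := by
  rw [sRefl, Submodule.reflection_orthogonal_apply, Submodule.reflection_singleton_apply]
  rw [copair, real_inner_self_eq_norm_sq, real_inner_comm v a]
  simp only [RCLike.ofReal_real_eq_id, id_eq]
  module

lemma sRefl_mul_self (a : V) : sRefl a * sRefl a = 1 := Submodule.reflection_mul_reflection _

lemma sRefl_sRefl (a v : V) : sRefl a (sRefl a v) = v := Submodule.reflection_reflection _ v

omit [FiniteDimensional ℝ V] in
lemma copair_map (g : V ≃ₗᵢ[ℝ] V) (v a : V) : copair (g v) (g a) = copair v a := by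
  rw [copair, copair, g.inner_map_map, g.inner_map_map]

lemma sRefl_conj (g : V ≃ₗᵢ[ℝ] V) (a : V) : sRefl (g a) = g * sRefl a * g⁻¹ := by
  ext v
  rw [LinearIsometryEquiv.coe_mul, LinearIsometryEquiv.coe_mul, Function.comp_apply,
    Function.comp_apply, LinearIsometryEquiv.inv_def, sRefl_apply', sRefl_apply', map_sub,
    g.apply_symm_apply, map_smul]
  congr 1
  rw [← g.apply_symm_apply v, copair_map, g.apply_symm_apply]

lemma sRefl_neg (a : V) : sRefl (-a) = sRefl a := by
  ext v
  simp [sRefl_apply', copair, inner_neg_neg, inner_neg_right, mul_neg, neg_div]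

end Helpers

namespace RootSystemCtx

section Basics

variable {V : Type*} [NormedAddCommGroup V] [InnerProductSpace ℝ V] [FiniteDimensional ℝ V]
variable (R : RootSystemCtx V)

lemma sroot_phi (i : Fin R.l) : R.sroot i ∈ R.Φ := R.pos_subset (R.sroot_mem i)

lemma sroot_ne (i : Fin R.l) : R.sroot i ≠ 0 := R.nonzero _ (R.sroot_phi i)

lemma inner_sroot_self_pos (i : Fin R.l) : 0 < ⟪R.sroot i, R.sroot i⟫ := by
  rw [real_inner_self_eq_norm_sq]
  have : 0 < ‖R.sroot i‖ := norm_pos_iff.mpr (R.sroot_ne i)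
  positivity

lemma inner_fw_sroot (i j : Fin R.l) :
    ⟪R.fw i, R.sroot j⟫ = if i = j then ⟪R.sroot j, R.sroot j⟫ / 2 else 0 := by
  have h := R.fw_pairing i j
  rw [copair] at h
  have hne : ⟪R.sroot j, R.sroot j⟫ ≠ 0 := ne_of_gt (R.inner_sroot_self_pos j)
  split_ifs at h ⊢ with hij
  · field_simp at h; linarith
  · field_simp at h; linarith

lemma inner_fw_sum (c : Fin R.l → ℝ) (j : Fin R.l) :
    ⟪R.fw j, ∑ i, c i • R.sroot i⟫ = c j * (⟪R.sroot j, R.sroot j⟫ / 2) := by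
  rw [inner_sum]
  rw [Finset.sum_eq_single j]
  · rw [real_inner_smul_right, inner_fw_sroot, if_pos rfl]
  · intro b _ hb
    rw [real_inner_smul_right, inner_fw_sroot, if_neg (Ne.symm hb), mul_zero]
  · intro h; exact absurd (Finset.mem_univ j) h

lemma inner_fw_pos_nonneg (j : Fin R.l) {a : V} (ha : a ∈ R.pos) : 0 ≤ ⟪R.fw j, a⟫ := by
  obtain ⟨c, hc⟩ := R.pos_nat_comb a ha
  rw [hc, inner_fw_sum]
  have h1 : (0:ℝ) ≤ (c j : ℝ) := Nat.cast_nonneg _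
  have h2 := R.inner_sroot_self_pos j
  nlinarith

lemma sep_sroot {v : V} (h : ∀ i, ⟪v, R.sroot i⟫ = 0) : v = 0 := by
  have hspan : Submodule.span ℝ (Set.range R.sroot) = ⊤ := by
    rw [eq_top_iff, ← R.span_top, Submodule.span_le]
    intro a haΦ
    rcases R.mem_pos_or a haΦ with ⟨hp, -⟩ | ⟨-, hp⟩
    · obtain ⟨c, hc⟩ := R.pos_nat_comb a hp
      rw [hc]
      exact Submodule.sum_mem _ fun i _ =>
        Submodule.smul_mem _ _ (Submodule.subset_span (Set.mem_range_self i))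
    · obtain ⟨c, hc⟩ := R.pos_nat_comb _ hp
      have : a = -∑ i, (c i : ℝ) • R.sroot i := by rw [← hc]; simp
      rw [this]
      exact Submodule.neg_mem _ <| Submodule.sum_mem _ fun i _ =>
        Submodule.smul_mem _ _ (Submodule.subset_span (Set.mem_range_self i))
  have hv : v ∈ Submodule.span ℝ (Set.range R.sroot) := hspan ▸ Submodule.mem_top
  obtain ⟨c, hc⟩ := (Finsupp.mem_span_range_iff_exists_finsupp).mp hv
  have key : ⟪Finsupp.sum c fun i a => a • R.sroot i, v⟫ = 0 := by
    rw [Finsupp.sum, sum_inner]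
    refine Finset.sum_eq_zero fun i _ => ?_
    rw [real_inner_smul_left, real_inner_comm, h i, mul_zero]
  rw [hc] at key
  exact inner_self_eq_zero.mp key

lemma fw_expand (v : V) : ∑ i, copair v (R.sroot i) • R.fw i = v := by
  have h : ∀ m, ⟪(∑ i, copair v (R.sroot i) • R.fw i) - v, R.sroot m⟫ = 0 := by
    intro m
    rw [inner_sub_left, sum_inner]
    have : ∀ i ∈ Finset.univ, ⟪copair v (R.sroot i) • R.fw i, R.sroot m⟫ =
        (if i = m then copair v (R.sroot m) * (⟪R.sroot m, R.sroot m⟫ / 2) else 0) := by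
      intro i _
      rw [real_inner_smul_left, inner_fw_sroot]
      split_ifs with h1
      · rw [h1]
      · rw [mul_zero]
    rw [Finset.sum_congr rfl this, Finset.sum_ite_eq' Finset.univ m _, if_pos (Finset.mem_univ m)]
    rw [copair]
    have hne : ⟪R.sroot m, R.sroot m⟫ ≠ 0 := ne_of_gt (R.inner_sroot_self_pos m)
    field_simp
    ring
  exact sub_eq_zero.mp (R.sep_sroot h)

lemma sep_fw {v : V} (h : ∀ i, ⟪R.fw i, v⟫ = 0) : v = 0 := by
  have key : ⟪∑ i, copair v (R.sroot i) • R.fw i, v⟫ = 0 := by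
    rw [sum_inner]
    refine Finset.sum_eq_zero fun i _ => ?_
    rw [real_inner_smul_left, h i, mul_zero]
  rw [R.fw_expand v] at key
  exact inner_self_eq_zero.mp key

lemma pos_neg_excl {a : V} (ha : a ∈ R.pos) : -a ∉ R.pos := by
  rcases R.mem_pos_or a (R.pos_subset ha) with ⟨-, h⟩ | ⟨h, -⟩
  · exact h
  · exact absurd ha h

lemma phi_not_pos {a : V} (ha : a ∈ R.Φ) (h : a ∉ R.pos) : -a ∈ R.pos := by
  rcases R.mem_pos_or a ha with ⟨hp, -⟩ | ⟨-, hp⟩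
  · exact absurd hp h
  · exact hp

end Basics


section Combinatorics

variable {V : Type*} [NormedAddCommGroup V] [InnerProductSpace ℝ V] [FiniteDimensional ℝ V]
variable (R : RootSystemCtx V)

lemma sRefl_self_neg (a : V) : sRefl a a = -a := by
  rw [sRefl_apply', copair]
  rcases eq_or_ne a 0 with rfl | ha
  · simp
  · have h : ⟪a, a⟫ ≠ 0 := inner_self_ne_zero.mpr ha
    rw [mul_div_assoc, div_self h, mul_one, two_smul]
    abel

lemma simple_refl_pos {a : V} (ha : a ∈ R.pos) (i : Fin R.l) (hne : a ≠ R.sroot i) :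
    sRefl (R.sroot i) a ∈ R.pos := by
  by_contra hnot
  have haΦ : a ∈ R.Φ := R.pos_subset ha
  have hsa : sRefl (R.sroot i) a ∈ R.Φ := R.refl_mem _ (R.sroot_phi i) _ haΦ
  have hneg : -(sRefl (R.sroot i) a) ∈ R.pos := R.phi_not_pos hsa hnot
  obtain ⟨c, hc⟩ := R.pos_nat_comb a ha
  have hck : ∀ k, k ≠ i → (c k : ℝ) = 0 := by
    intro k hk
    have h1 : 0 ≤ ⟪R.fw k, -(sRefl (R.sroot i) a)⟫ := R.inner_fw_pos_nonneg k hneg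
    rw [inner_neg_right, sRefl_apply', inner_sub_right, real_inner_smul_right,
      inner_fw_sroot, if_neg hk, mul_zero, sub_zero] at h1
    have h2 : ⟪R.fw k, a⟫ = (c k : ℝ) * (⟪R.sroot k, R.sroot k⟫ / 2) := by
      rw [hc, inner_fw_sum]
    have h3 := R.inner_sroot_self_pos k
    have h4 : (0:ℝ) ≤ (c k : ℝ) := Nat.cast_nonneg _
    nlinarith
  have hai : a = (c i : ℝ) • R.sroot i := by
    rw [hc, Finset.sum_eq_single i]
    · intro b _ hb; rw [hck b hb, zero_smul]
    · intro h; exact absurd (Finset.mem_univ i) h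
  have := R.reduced (R.sroot i) (R.sroot_phi i) ((c i : ℝ)) (by rw [← hai]; exact haΦ)
  rcases this with h1 | h1
  · rw [h1, one_smul] at hai; exact hne hai
  · have : (0:ℝ) ≤ (c i : ℝ) := Nat.cast_nonneg _
    rw [h1] at this; linarith

end Combinatorics

section Weyl

variable {V : Type*} [NormedAddCommGroup V] [InnerProductSpace ℝ V] [FiniteDimensional ℝ V]
variable (R : RootSystemCtx V)

lemma sRefl_mem_weyl {a : V} (ha : a ∈ R.Φ) : sRefl a ∈ R.weylGroup :=
  Subgroup.subset_closure ⟨a, ha, rfl⟩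

lemma simple_mem_weyl (i : Fin R.l) : sRefl (R.sroot i) ∈ R.weylGroup :=
  R.sRefl_mem_weyl (R.sroot_phi i)

lemma sRefl_inv (a : V) : (sRefl a)⁻¹ = sRefl a := inv_eq_of_mul_eq_one_right (sRefl_mul_self a)

lemma weyl_maps {w : V ≃ₗᵢ[ℝ] V} (hw : w ∈ R.weylGroup) : ∀ a ∈ R.Φ, w a ∈ R.Φ := by
  have main : ∀ a ∈ R.Φ, w a ∈ R.Φ ∧ w⁻¹ a ∈ R.Φ := by
    refine Subgroup.closure_induction ?_ ?_ ?_ ?_ hw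
    · rintro x ⟨a, ha, rfl⟩ b hb
      refine ⟨R.refl_mem a ha b hb, ?_⟩
      rw [sRefl_inv]
      exact R.refl_mem a ha b hb
    · intro a ha
      refine ⟨?_, ?_⟩ <;> simpa using ha
    · intro x y _ _ hx hy b hb
      refine ⟨?_, ?_⟩
      · have : (x * y) b = x (y b) := rfl
        rw [this]; exact (hx _ ((hy b hb).1)).1
      · rw [mul_inv_rev]
        have : (y⁻¹ * x⁻¹) b = y⁻¹ (x⁻¹ b) := rfl
        rw [this]; exact (hy _ ((hx b hb).2)).2
    · intro x _ hx b hb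
      exact ⟨(hx b hb).2, by rw [inv_inv]; exact (hx b hb).1⟩
  exact fun a ha => (main a ha).1

/-- The word map: product of simple reflections indexed by a list. -/
def wprod (γ : List (Fin R.l)) : V ≃ₗᵢ[ℝ] V := (γ.map fun i => sRefl (R.sroot i)).prod

lemma wprod_nil : R.wprod [] = 1 := rfl

lemma wprod_cons (i : Fin R.l) (γ : List (Fin R.l)) :
    R.wprod (i :: γ) = sRefl (R.sroot i) * R.wprod γ := by
  simp [wprod]

lemma wprod_append (γ δ : List (Fin R.l)) :
    R.wprod (γ ++ δ) = R.wprod γ * R.wprod δ := by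
  simp [wprod]

lemma wprod_singleton (i : Fin R.l) : R.wprod [i] = sRefl (R.sroot i) := by
  simp [wprod]

lemma wprod_mem (γ : List (Fin R.l)) : R.wprod γ ∈ R.weylGroup := by
  induction γ with
  | nil => exact Subgroup.one_mem _
  | cons i γ ih =>
    rw [wprod_cons]
    exact Subgroup.mul_mem _ (R.simple_mem_weyl i) ih

lemma wprod_inv (γ : List (Fin R.l)) : (R.wprod γ)⁻¹ = R.wprod γ.reverse := by
  induction γ with
  | nil => simp [wprod]
  | cons i γ ih =>
    rw [wprod_cons, mul_inv_rev, ih, List.reverse_cons, wprod_append, wprod_singleton, sRefl_inv]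

end Weyl

section NSet

variable {V : Type*} [NormedAddCommGroup V] [InnerProductSpace ℝ V] [FiniteDimensional ℝ V]
variable (R : RootSystemCtx V)

open Classical in
/-- The set of positive roots sent to negative roots by `w`. -/
def nset (w : V ≃ₗᵢ[ℝ] V) : Finset V := R.pos.filter (fun a => w a ∉ R.pos)

open Classical in
lemma mem_nset {w : V ≃ₗᵢ[ℝ] V} {a : V} : a ∈ R.nset w ↔ a ∈ R.pos ∧ w a ∉ R.pos := by
  rw [nset, Finset.mem_filter]

/-- The number of positive roots sent to negative roots by `w`. -/
def nlen (w : V ≃ₗᵢ[ℝ] V) : ℕ := (R.nset w).card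

lemma nlen_one : R.nlen 1 = 0 := by
  rw [nlen, Finset.card_eq_zero]
  ext a
  simp only [mem_nset, Finset.notMem_empty, iff_false]
  rintro ⟨h1, h2⟩
  exact h2 h1

lemma sRefl_sroot_self (i : Fin R.l) : sRefl (R.sroot i) (R.sroot i) = -R.sroot i :=
  sRefl_self_neg _

lemma nlen_step_pos {w : V ≃ₗᵢ[ℝ] V} (hw : w ∈ R.weylGroup) (i : Fin R.l)
    (h : w (R.sroot i) ∈ R.pos) :
    R.nlen (w * sRefl (R.sroot i)) = R.nlen w + 1 := by
  classical
  have hset : R.nset (w * sRefl (R.sroot i)) = insert (R.sroot i) ((R.nset w).image (sRefl (R.sroot i))) := by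
    ext b
    simp only [mem_nset, Finset.mem_insert, Finset.mem_image]
    constructor
    · rintro ⟨hb, hwb⟩
      rcases eq_or_ne b (R.sroot i) with rfl | hne
      · exact Or.inl rfl
      · refine Or.inr ⟨sRefl (R.sroot i) b, ?_, sRefl_sRefl _ _⟩
        refine ⟨R.simple_refl_pos hb i hne, ?_⟩
        have : (w * sRefl (R.sroot i)) b = w (sRefl (R.sroot i) b) := rfl
        rw [this] at hwb
        exact hwb
    · rintro (rfl | ⟨a, ha, rfl⟩)
      · refine ⟨R.sroot_mem i, ?_⟩
        have : (w * sRefl (R.sroot i)) (R.sroot i) = w (sRefl (R.sroot i) (R.sroot i)) := rfl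
        rw [this, sRefl_sroot_self, map_neg]
        exact R.pos_neg_excl h
      · obtain ⟨ha1, ha2⟩ := ha
        have hne : a ≠ R.sroot i := by
          rintro rfl; exact ha2 h
        refine ⟨R.simple_refl_pos ha1 i hne, ?_⟩
        have : (w * sRefl (R.sroot i)) (sRefl (R.sroot i) a) = w (sRefl (R.sroot i) (sRefl (R.sroot i) a)) := rfl
        rw [this, sRefl_sRefl]
        exact ha2
  rw [nlen, nlen, hset, Finset.card_insert_of_notMem, Finset.card_image_of_injective _ (sRefl (R.sroot i)).injective]
  rw [Finset.mem_image]
  rintro ⟨a, ha, hsa⟩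
  rw [mem_nset] at ha
  have : a = -R.sroot i := by
    have := congrArg (sRefl (R.sroot i)) hsa
    rwa [sRefl_sRefl, sRefl_sroot_self] at this
  rw [this] at ha
  exact R.pos_neg_excl (R.sroot_mem i) ha.1

lemma nlen_step_neg {w : V ≃ₗᵢ[ℝ] V} (hw : w ∈ R.weylGroup) (i : Fin R.l)
    (h : w (R.sroot i) ∉ R.pos) :
    R.nlen w = R.nlen (w * sRefl (R.sroot i)) + 1 := by
  have hΦ : w (R.sroot i) ∈ R.Φ := R.weyl_maps hw _ (R.sroot_phi i)
  have h2 : (w * sRefl (R.sroot i)) (R.sroot i) ∈ R.pos := by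
    have : (w * sRefl (R.sroot i)) (R.sroot i) = w (sRefl (R.sroot i) (R.sroot i)) := rfl
    rw [this, sRefl_sroot_self, map_neg]
    exact R.phi_not_pos hΦ h
  have hw' : w * sRefl (R.sroot i) ∈ R.weylGroup :=
    Subgroup.mul_mem _ hw (R.simple_mem_weyl i)
  have := R.nlen_step_pos hw' i h2
  rwa [mul_assoc, sRefl_mul_self, mul_one] at this

end NSet

section Exchange

variable {V : Type*} [NormedAddCommGroup V] [InnerProductSpace ℝ V] [FiniteDimensional ℝ V]
variable (R : RootSystemCtx V)

lemma first_flip : ∀ (γ : List (Fin R.l)) (j : Fin R.l), R.wprod γ (R.sroot j) ∉ R.pos →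
    ∃ γ₁ i γ₂, γ = γ₁ ++ i :: γ₂ ∧ R.wprod γ₂ (R.sroot j) ∈ R.pos ∧
      sRefl (R.sroot i) (R.wprod γ₂ (R.sroot j)) ∉ R.pos := by
  intro γ
  induction γ with
  | nil =>
    intro j h
    rw [wprod_nil] at h
    exact absurd (R.sroot_mem j) (by simpa using h)
  | cons i γ' ih =>
    intro j h
    by_cases hp : R.wprod γ' (R.sroot j) ∈ R.pos
    · refine ⟨[], i, γ', rfl, hp, ?_⟩
      rw [wprod_cons] at h
      exact h
    · obtain ⟨γ₁, i', γ₂, heq, h1, h2⟩ := ih j hp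
      exact ⟨i :: γ₁, i', γ₂, by rw [heq]; rfl, h1, h2⟩

lemma exchange (γ : List (Fin R.l)) (j : Fin R.l) (h : R.wprod γ (R.sroot j) ∉ R.pos) :
    ∃ γ' : List (Fin R.l), γ'.length + 1 = γ.length ∧
      R.wprod γ * sRefl (R.sroot j) = R.wprod γ' := by
  obtain ⟨γ₁, i, γ₂, heq, h1, h2⟩ := R.first_flip γ j h
  have hβ : R.wprod γ₂ (R.sroot j) = R.sroot i := by
    by_contra hne
    exact h2 (R.simple_refl_pos h1 i hne)
  have hconj : sRefl (R.sroot i) = R.wprod γ₂ * sRefl (R.sroot j) * (R.wprod γ₂)⁻¹ := by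
    rw [← sRefl_conj, hβ]
  have hswap : sRefl (R.sroot i) * R.wprod γ₂ = R.wprod γ₂ * sRefl (R.sroot j) := by
    rw [hconj]; group
  refine ⟨γ₁ ++ γ₂, ?_, ?_⟩
  · rw [heq]; simp [List.length_append]; omega
  · rw [heq, wprod_append, wprod_cons, wprod_append]
    calc R.wprod γ₁ * (sRefl (R.sroot i) * R.wprod γ₂) * sRefl (R.sroot j)
        = R.wprod γ₁ * (R.wprod γ₂ * sRefl (R.sroot j)) * sRefl (R.sroot j) := by rw [hswap]
      _ = R.wprod γ₁ * R.wprod γ₂ * (sRefl (R.sroot j) * sRefl (R.sroot j)) := by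
          rw [mul_assoc, mul_assoc, mul_assoc]
      _ = R.wprod γ₁ * R.wprod γ₂ := by rw [sRefl_mul_self, mul_one]

lemma nlen_all_up (γ : List (Fin R.l))
    (h : ∀ δ₁ (j : Fin R.l) δ₂, γ = δ₁ ++ j :: δ₂ → R.wprod δ₁ (R.sroot j) ∈ R.pos) :
    R.nlen (R.wprod γ) = γ.length := by
  induction γ using List.reverseRecOn with
  | nil => rw [wprod_nil]; exact R.nlen_one
  | append_singleton δ j ih =>
    rw [wprod_append, wprod_singleton]
    have hδ : R.wprod δ (R.sroot j) ∈ R.pos := h δ j [] rfl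
    rw [R.nlen_step_pos (R.wprod_mem δ) j hδ]
    rw [ih (fun δ₁ j' δ₂ hsplit => h δ₁ j' (δ₂ ++ [j]) (by rw [hsplit]; simp))]
    simp

lemma word_one : ∀ n (γ : List (Fin R.l)), γ.length = n → R.nlen (R.wprod γ) = 0 →
    R.wprod γ = 1 := by
  intro n
  induction n using Nat.strong_induction_on with
  | _ n ih =>
    intro γ hlen hN
    rcases γ with _ | ⟨i, γ'⟩
    · rfl
    · by_cases hall : ∀ δ₁ (j : Fin R.l) δ₂, (i :: γ') = δ₁ ++ j :: δ₂ →
          R.wprod δ₁ (R.sroot j) ∈ R.pos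
      · have := R.nlen_all_up _ hall
        rw [hN] at this
        simp at this
      · push_neg at hall
        obtain ⟨δ₁, j, δ₂, hsplit, hneg⟩ := hall
        obtain ⟨γ'', hlen'', hprod⟩ := R.exchange δ₁ j hneg
        have hfact : R.wprod (i :: γ') = R.wprod (γ'' ++ δ₂) := by
          rw [hsplit, wprod_append, wprod_cons, wprod_append, ← hprod, mul_assoc]
        have hlt : (γ'' ++ δ₂).length < n := by
          have h1 : (i :: γ').length = δ₁.length + 1 + δ₂.length := by
            rw [hsplit]; simp; omega
          rw [List.length_append]
          omega
        rw [hfact]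
        exact ih _ hlt (γ'' ++ δ₂) rfl (by rw [← hfact]; exact hN)

end Exchange

section Generation

variable {V : Type*} [NormedAddCommGroup V] [InnerProductSpace ℝ V] [FiniteDimensional ℝ V]
variable (R : RootSystemCtx V)

lemma refl_word_pos : ∀ n : ℕ, ∀ a ∈ R.pos, ∀ c : Fin R.l → ℕ,
    a = ∑ i, (c i : ℝ) • R.sroot i → (∑ i, c i) = n →
    ∃ γ, sRefl a = R.wprod γ := by
  intro n
  induction n using Nat.strong_induction_on with
  | _ n ih =>
    intro a ha c hc hsum
    have haΦ : a ∈ R.Φ := R.pos_subset ha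
    by_cases hsimple : ∃ i, a = R.sroot i
    · obtain ⟨i, rfl⟩ := hsimple
      exact ⟨[i], (R.wprod_singleton i).symm⟩
    · push_neg at hsimple
      -- find i with ⟪a, sroot i⟫ > 0
      have haa : 0 < ⟪a, a⟫ := by
        rw [real_inner_self_eq_norm_sq]
        have : 0 < ‖a‖ := norm_pos_iff.mpr (R.nonzero a haΦ)
        positivity
      have hex : ∃ i, 0 < ⟪a, R.sroot i⟫ := by
        by_contra hno
        push_neg at hno
        have : ⟪a, a⟫ ≤ 0 := by
          nth_rewrite 2 [hc]
          rw [inner_sum]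
          refine Finset.sum_nonpos fun k _ => ?_
          rw [real_inner_smul_right]
          exact mul_nonpos_of_nonneg_of_nonpos (Nat.cast_nonneg _) (hno k)
        linarith
      obtain ⟨i, hi⟩ := hex
      obtain ⟨z, hz⟩ := R.crystal (R.sroot i) (R.sroot_phi i) a haΦ
      have hzpos : 0 < copair a (R.sroot i) := by
        rw [copair]
        have := R.inner_sroot_self_pos i
        positivity
      have hz1 : (1:ℝ) ≤ (z:ℝ) := by
        rw [hz] at hzpos
        exact_mod_cast hzpos
      have hne : a ≠ R.sroot i := hsimple i
      have hb : sRefl (R.sroot i) a ∈ R.pos := R.simple_refl_pos ha i hne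
      obtain ⟨c', hc'⟩ := R.pos_nat_comb _ hb
      -- coordinates of b
      have hcoord : ∀ k, (c' k : ℝ) * (⟪R.sroot k, R.sroot k⟫ / 2) =
          (c k : ℝ) * (⟪R.sroot k, R.sroot k⟫ / 2) -
            (if k = i then copair a (R.sroot i) * (⟪R.sroot i, R.sroot i⟫ / 2) else 0) := by
        intro k
        have h1 : ⟪R.fw k, sRefl (R.sroot i) a⟫ = (c' k : ℝ) * (⟪R.sroot k, R.sroot k⟫ / 2) := by
          rw [hc', inner_fw_sum]
        have h2 : ⟪R.fw k, sRefl (R.sroot i) a⟫ =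
            (c k : ℝ) * (⟪R.sroot k, R.sroot k⟫ / 2) -
              (if k = i then copair a (R.sroot i) * (⟪R.sroot i, R.sroot i⟫ / 2) else 0) := by
          rw [sRefl_apply', inner_sub_right, real_inner_smul_right, inner_fw_sroot]
          congr 1
          · conv_lhs => rw [hc]
            rw [inner_fw_sum]
          · split_ifs with hk
            · subst hk; rfl
            · rw [mul_zero]
        rw [← h1, h2]
      have hki : ∀ k, k ≠ i → c' k = c k := by
        intro k hk
        have := hcoord k
        rw [if_neg hk, sub_zero] at this
        have hq := R.inner_sroot_self_pos k
        have hr : (c' k : ℝ) = (c k : ℝ) := by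
          have h2 : (⟪R.sroot k, R.sroot k⟫ / 2) ≠ 0 := by positivity
          exact mul_right_cancel₀ h2 this
        exact Nat.cast_injective hr
      have hii : (c' i : ℝ) = (c i : ℝ) - (z : ℝ) := by
        have := hcoord i
        rw [if_pos rfl] at this
        have hq := R.inner_sroot_self_pos i
        have h2 : (⟪R.sroot i, R.sroot i⟫ / 2) ≠ 0 := by positivity
        rw [hz] at this
        field_simp at this
        nlinarith [this]
      have hsum' : (∑ k, c' k) < n := by
        have hcast : ((∑ k, c' k : ℕ) : ℝ) = ((∑ k, c k : ℕ) : ℝ) - (z:ℝ) := by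
          push_cast
          rw [Finset.sum_eq_sum_sdiff_singleton_add (Finset.mem_univ i),
            Finset.sum_eq_sum_sdiff_singleton_add (Finset.mem_univ i) (fun k => ((c k : ℕ) : ℝ))]
          rw [hii]
          have : ∀ k ∈ Finset.univ \ {i}, ((c' k : ℕ) : ℝ) = ((c k : ℕ) : ℝ) := by
            intro k hk
            rw [Finset.mem_sdiff, Finset.mem_singleton] at hk
            exact congrArg (fun m : ℕ => (m:ℝ)) (hki k hk.2)
          rw [Finset.sum_congr rfl this]
          ring
        have : ((∑ k, c' k : ℕ) : ℝ) < n := by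
          rw [hcast, ← hsum]
          push_cast
          linarith
        exact_mod_cast this
      obtain ⟨γ', hγ'⟩ := ih _ hsum' _ hb c' hc' rfl
      refine ⟨i :: (γ' ++ [i]), ?_⟩
      have hconj : sRefl (sRefl (R.sroot i) a) =
          sRefl (R.sroot i) * sRefl a * (sRefl (R.sroot i))⁻¹ := sRefl_conj _ _
      rw [hγ', sRefl_inv] at hconj
      rw [wprod_cons, wprod_append, wprod_singleton, hconj]
      rw [mul_assoc (sRefl (R.sroot i) * sRefl a), sRefl_mul_self, mul_one, ← mul_assoc,
        sRefl_mul_self, one_mul]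
lemma refl_word {a : V} (ha : a ∈ R.Φ) : ∃ γ, sRefl a = R.wprod γ := by
  rcases R.mem_pos_or a ha with ⟨hp, -⟩ | ⟨-, hp⟩
  · obtain ⟨c, hc⟩ := R.pos_nat_comb a hp
    exact R.refl_word_pos _ a hp c hc rfl
  · obtain ⟨c, hc⟩ := R.pos_nat_comb _ hp
    obtain ⟨γ, hγ⟩ := R.refl_word_pos _ _ hp c hc rfl
    exact ⟨γ, by rw [← hγ, sRefl_neg]⟩

lemma exists_word {w : V ≃ₗᵢ[ℝ] V} (hw : w ∈ R.weylGroup) : ∃ γ, w = R.wprod γ := by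
  refine Subgroup.closure_induction ?_ ?_ ?_ ?_ hw
  · rintro x ⟨a, ha, rfl⟩
    exact R.refl_word ha
  · exact ⟨[], rfl⟩
  · rintro x y _ _ ⟨γ, rfl⟩ ⟨δ, rfl⟩
    exact ⟨γ ++ δ, (R.wprod_append γ δ).symm⟩
  · rintro x _ ⟨γ, rfl⟩
    exact ⟨γ.reverse, R.wprod_inv γ⟩

end Generation

section KeyLemma

variable {V : Type*} [NormedAddCommGroup V] [InnerProductSpace ℝ V] [FiniteDimensional ℝ V]
variable (R : RootSystemCtx V)

lemma fw_dominant (j : Fin R.l) : R.IsDominant (R.fw j) := by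
  intro i
  rw [R.fw_pairing j i]
  split_ifs <;> norm_num

lemma key_aux : ∀ n : ℕ, ∀ w ∈ R.weylGroup, R.nlen w = n →
    ∀ lam : V, R.IsDominant lam → ∀ j, 0 ≤ ⟪R.fw j, lam - w lam⟫ := by
  intro n
  induction n using Nat.strong_induction_on with
  | _ n ih =>
    intro w hw hn lam hdom j
    rcases Nat.eq_zero_or_pos n with h0 | hpos
    · obtain ⟨γ, hγ⟩ := R.exists_word hw
      have hone : R.wprod γ = 1 := R.word_one γ.length γ rfl (by rw [← hγ, hn, h0])
      rw [hγ, hone]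
      simp
    · -- there is a simple root sent negative
      have hex : ∃ i, w (R.sroot i) ∉ R.pos := by
        by_contra hno
        push_neg at hno
        have hne : (R.nset w).Nonempty := by
          rw [← Finset.card_pos, ← nlen, hn]; exact hpos
        obtain ⟨a, haw⟩ := hne
        rw [mem_nset] at haw
        obtain ⟨hapos, hwa⟩ := haw
        obtain ⟨c, hc⟩ := R.pos_nat_comb a hapos
        have hwa0 : ∀ k, ⟪R.fw k, w a⟫ = 0 := by
          intro k
          have hwaΦ : w a ∈ R.Φ := R.weyl_maps hw a (R.pos_subset hapos)
          have hneg : -(w a) ∈ R.pos := R.phi_not_pos hwaΦ hwa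
          have h1 : 0 ≤ ⟪R.fw k, -(w a)⟫ := R.inner_fw_pos_nonneg k hneg
          rw [inner_neg_right] at h1
          have h2 : 0 ≤ ⟪R.fw k, w a⟫ := by
            have hrw : w a = ∑ m, (c m : ℝ) • w (R.sroot m) := by
              rw [hc, map_sum]
              exact Finset.sum_congr rfl fun m _ => by rw [map_smul]
            rw [hrw, inner_sum]
            refine Finset.sum_nonneg fun m _ => ?_
            rw [real_inner_smul_right]
            exact mul_nonneg (Nat.cast_nonneg _) (R.inner_fw_pos_nonneg k (hno m))
          linarith
        have : w a = 0 := R.sep_fw hwa0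
        have : a = 0 := by
          have := congrArg w.symm this
          rwa [w.symm_apply_apply, map_zero] at this
        exact R.nonzero a (R.pos_subset hapos) this
      obtain ⟨i, hi⟩ := hex
      set σi := sRefl (R.sroot i) with hσi
      have hw' : w * σi ∈ R.weylGroup := Subgroup.mul_mem _ hw (R.simple_mem_weyl i)
      have hstep := R.nlen_step_neg hw i hi
      rw [hn, ← hσi] at hstep
      have hlt : R.nlen (w * σi) < n := by omega
      have hIH := ih _ hlt (w * σi) hw' rfl lam hdom j
      -- decomposition
      have hdecomp : lam - w lam =
          (lam - (w * σi) lam) + copair lam (R.sroot i) • (-(w (R.sroot i))) := by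
        have h1 : (w * σi) lam = w (σi lam) := rfl
        have h2 : σi lam = lam - copair lam (R.sroot i) • R.sroot i := sRefl_apply' _ _
        rw [h1, h2, map_sub, map_smul]
        module
      rw [hdecomp, inner_add_right]
      have hterm : 0 ≤ ⟪R.fw j, copair lam (R.sroot i) • (-(w (R.sroot i)))⟫ := by
        rw [real_inner_smul_right]
        refine mul_nonneg (hdom i) ?_
        refine R.inner_fw_pos_nonneg j ?_
        exact R.phi_not_pos (R.weyl_maps hw _ (R.sroot_phi i)) hi
      linarith

lemma key {w : V ≃ₗᵢ[ℝ] V} (hw : w ∈ R.weylGroup) {lam : V} (hdom : R.IsDominant lam)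
    (j : Fin R.l) : 0 ≤ ⟪R.fw j, lam - w lam⟫ :=
  R.key_aux (R.nlen w) w hw rfl lam hdom j

end KeyLemma

end RootSystemCtx

/-- For an involution `s ∈ W` fixing no fundamental weight, the function
`f(λ) = ‖λ − s(λ)‖²` is a homogeneous quadratic polynomial in the coordinates of
`λ = Σ λ_i ϖ_i` whose diagonal coefficients are positive and whose off-diagonal
coefficients are nonnegative. -/
theorem statement3 {V : Type*} [NormedAddCommGroup V] [InnerProductSpace ℝ V]
    [FiniteDimensional ℝ V] (R : RootSystemCtx V)
    (s : V ≃ₗᵢ[ℝ] V) (hs : s ∈ R.weylGroup) (hinv : s * s = 1)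
    (hfix : ∀ i, s (R.fw i) ≠ R.fw i) :
    ∃ c : Fin R.l → Fin R.l → ℝ,
      (∀ i, 0 < c i i) ∧ (∀ i j, i ≠ j → 0 ≤ c i j) ∧
      ∀ coeff : Fin R.l → ℝ,
        ‖(∑ i, coeff i • R.fw i) - s (∑ i, coeff i • R.fw i)‖ ^ 2 =
          ∑ i, ∑ j, c i j * coeff i * coeff j := by
  classical
  set u : Fin R.l → V := fun i => R.fw i - s (R.fw i) with hu
  have hss : ∀ v : V, s (s v) = v := fun v => by
    have := congrArg (fun g : V ≃ₗᵢ[ℝ] V => g v) hinv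
    simpa using this
  refine ⟨fun i j => ⟪u i, u j⟫, ?_, ?_, ?_⟩
  · intro i
    show 0 < ⟪u i, u i⟫
    have hne : u i ≠ 0 := sub_ne_zero.mpr fun h => hfix i h.symm
    rw [real_inner_self_eq_norm_sq]
    have : 0 < ‖u i‖ := norm_pos_iff.mpr hne
    positivity
  · intro i j _
    show (0:ℝ) ≤ ⟪u i, u j⟫
    have h1 : ⟪s (R.fw i), R.fw j⟫ = ⟪R.fw i, s (R.fw j)⟫ := by
      conv_lhs => rw [← hss (R.fw j)]
      rw [s.inner_map_map]
    have hsym : ⟪s (R.fw i), R.fw j - s (R.fw j)⟫ = -⟪R.fw i, R.fw j - s (R.fw j)⟫ := by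
      rw [inner_sub_right, inner_sub_right, h1, s.inner_map_map]
      ring
    have hkey : 0 ≤ ⟪R.fw i, R.fw j - s (R.fw j)⟫ := R.key hs (R.fw_dominant j) i
    have hc : ⟪u i, u j⟫ = 2 * ⟪R.fw i, R.fw j - s (R.fw j)⟫ := by
      rw [hu]
      simp only
      rw [inner_sub_left, hsym]
      ring
    rw [hc]
    linarith
  · intro coeff
    have hexp : (∑ i, coeff i • R.fw i) - s (∑ i, coeff i • R.fw i) = ∑ i, coeff i • u i := by
      rw [map_sum, ← Finset.sum_sub_distrib]
      refine Finset.sum_congr rfl fun i _ => ?_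
      rw [map_smul, ← smul_sub]
    rw [hexp, ← real_inner_self_eq_norm_sq, sum_inner]
    beta_reduce
    refine Finset.sum_congr rfl fun i _ => ?_
    rw [real_inner_smul_left, inner_sum, Finset.mul_sum]
    refine Finset.sum_congr rfl fun j _ => ?_
    rw [real_inner_smul_right]
    ring
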